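/- Let r = (1363 − √1387369)/120 and w = (√1387369 − 1075)/96. Then w = 3 − 1.25·r, 1 ≤ w ≤ 1.5, and for every real n' with 0 ≤ n' ≤ 1, the denominator 8533/2352 − 1.25·n' + w/7 is positive and (w·n' − 3·n' + 35/6)/(8533/2352 − 1.25·n' + w/7) = r. -/
import Mathlib


theorem stmt_18 :
    let r : ℝ := (1363 - Real.sqrt 1387369) / 120
    let w : ℝ := (Real.sqrt 1387369 - 1075) / 96
    w = 3 - 1.25 * r ∧ 1 ≤ w ∧ w ≤ 1.5 ∧
    ∀ n' : ℝ, 0 ≤ n' → n' ≤ 1 →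
      0 < 8533 / 2352 - 1.25 * n' + w / 7 ∧
      (w * n' - 3 * n' + 35 / 6) / (8533 / 2352 - 1.25 * n' + w / 7) = r := by
  intro r w
  have hs0 : (0:ℝ) ≤ Real.sqrt 1387369 := Real.sqrt_nonneg _
  have hs : Real.sqrt 1387369 ^ 2 = 1387369 := Real.sq_sqrt (by norm_num)
  set s := Real.sqrt 1387369 with hsdef
  have hlo : 1177 < s := by nlinarith
  have hhi : s < 1178 := by nlinarith
  refine ⟨by show _ = _; norm_num [r, w]; ring, by simp only [w]; nlinarith,
    by simp only [w]; norm_num; nlinarith, fun n' h0 h1 => ?_⟩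
  have hden : 0 < 8533 / 2352 - 1.25 * n' + w / 7 := by
    simp only [w]; nlinarith
  refine ⟨hden, ?_⟩
  rw [div_eq_iff (ne_of_gt hden)]
  simp only [r, w]
  nlinarith [sq_nonneg n', mul_nonneg h0 hs0]
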